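/- Let p ≥ q ≥ r be positive integers with gcd(p,q,r)=1, t = gcd(p,q), r₁ = p/t, r₂ = q/t. Let S ⊆ {1,...,n} be a set containing no solution (x,y,z) to px+qy=rz, and suppose M is the largest element of S divisible by t. Then |S| ≤ M − ⌊rM/(r₂(p+q))⌋ − (r₁r₂ − r₁ − r₂ + 1)·⌊⌊rM/(r₁(p+q)) − 1/r₂⌋/(r₁r₂)⌋ + ⌈(n−M)(t−1)/t⌉. -/

import Mathlib

private lemma dvd_lin_iff (d e c A j : ℤ) (h : d ∣ c*e - 1) :
    d ∣ (A + j*e) ↔ d ∣ (j + c*A) := by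
  obtain ⟨k, hk⟩ := h
  constructor
  · rintro ⟨l, hl⟩
    exact ⟨c*l - j*k, by linear_combination c*hl - j*hk⟩
  · rintro ⟨l, hl⟩
    exact ⟨e*l - A*k, by linear_combination e*hl - A*hk⟩

private lemma card_AP (a α d : ℤ) (k : ℕ) (hd : 0 < d) :
    ((Finset.Ico a (a + d*k)).filter (fun j => d ∣ (j - α))).card = k := by
  classical
  set j₀ : ℤ := a + (α - a) % d with hj₀
  have hd' : d ≠ 0 := hd.ne'
  have h1 : a ≤ j₀ := le_add_of_nonneg_right (Int.emod_nonneg _ hd')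
  have h2 : j₀ < a + d := by
    have := Int.emod_lt_of_pos (α - a) hd; omega
  have h3 : d ∣ j₀ - α := by
    have := Int.emod_def (α - a) d
    exact ⟨-((α - a)/d), by linarith⟩
  have key : ∀ j ∈ (Finset.Ico a (a + d*(k:ℤ))).filter (fun j => d ∣ (j - α)),
      0 ≤ (j - j₀)/d ∧ (j - j₀)/d < k ∧ d * ((j - j₀)/d) = j - j₀ := by
    intro j hj
    simp only [Finset.mem_filter, Finset.mem_Ico] at hj
    obtain ⟨⟨hja, hjb⟩, hjd⟩ := hj
    have hdj : d ∣ j - j₀ := by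
      have he : j - j₀ = (j - α) - (j₀ - α) := by ring
      rw [he]; exact dvd_sub hjd h3
    have hmul : d * ((j - j₀)/d) = j - j₀ := Int.mul_ediv_cancel' hdj
    refine ⟨?_, ?_, hmul⟩
    · nlinarith [hmul]
    · nlinarith [hmul]
  refine (Finset.card_bij' (fun j _ => ((j - j₀)/d).toNat) (fun (i : ℕ) _ => j₀ + d*i)
    ?_ ?_ ?_ ?_).trans (Finset.card_range k)
  · intro j hj
    obtain ⟨h4, h5, _⟩ := key j hj
    simp only [Finset.mem_range]
    omega
  · intro i hi
    simp only [Finset.mem_range] at hi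
    simp only [Finset.mem_filter, Finset.mem_Ico]
    have hik : (i:ℤ) ≤ (k:ℤ) - 1 := by omega
    have hdi : (0:ℤ) ≤ d*(i:ℤ) := by positivity
    refine ⟨⟨by linarith, ?_⟩, ?_⟩
    · nlinarith
    · have he : j₀ + d*i - α = (j₀ - α) + d*i := by ring
      rw [he]; exact dvd_add h3 ⟨i, rfl⟩
  · intro j hj
    obtain ⟨h4, _, h6⟩ := key j hj
    show j₀ + d * (((j - j₀)/d).toNat : ℤ) = j
    rw [Int.toNat_of_nonneg h4]
    linarith
  · intro i hi
    simp only [Finset.mem_range] at hi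
    show ((j₀ + d*(i:ℤ) - j₀)/d).toNat = i
    rw [show j₀ + d*(i:ℤ) - j₀ = d*i by ring, Int.mul_ediv_cancel_left _ hd']
    exact Int.toNat_natCast i

private lemma block_count (d₁ d₂ : ℕ) (h₁ : 0 < d₁) (h₂ : 0 < d₂) (hco : Nat.Coprime d₁ d₂)
    (α₁ α₂ a : ℤ) :
    (d₁ - 1) * (d₂ - 1) ≤ ((Finset.Ico a (a + (d₁:ℤ)*(d₂:ℤ))).filter
      (fun j => ¬((d₁:ℤ) ∣ (j - α₁)) ∧ ¬((d₂:ℤ) ∣ (j - α₂)))).card := by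
  classical
  set B := Finset.Ico a (a + (d₁:ℤ)*(d₂:ℤ)) with hB
  have hcardB : B.card = d₁ * d₂ := by
    rw [hB, Int.card_Ico]
    have : a + (d₁:ℤ)*(d₂:ℤ) - a = ((d₁*d₂ : ℕ) : ℤ) := by push_cast; ring
    rw [this, Int.toNat_natCast]
  set b1 := B.filter (fun j => (d₁:ℤ) ∣ (j - α₁)) with hb1
  set b2 := B.filter (fun j => (d₂:ℤ) ∣ (j - α₂)) with hb2
  have hc1 : b1.card = d₂ := card_AP a α₁ (d₁:ℤ) d₂ (by exact_mod_cast h₁)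
  have hc2 : b2.card = d₁ := by
    have := card_AP a α₂ (d₂:ℤ) d₁ (by exact_mod_cast h₂)
    rw [hb2, hB]
    rw [show a + (d₁:ℤ)*(d₂:ℤ) = a + (d₂:ℤ)*(d₁:ℤ) by ring]
    exact this
  -- CRT: b1 ∩ b2 nonempty
  have hcopZ : IsCoprime (d₁:ℤ) (d₂:ℤ) := Nat.isCoprime_iff_coprime.mpr hco
  obtain ⟨s, w, hsw⟩ := hcopZ
  set j₀ : ℤ := α₁*(w*d₂) + α₂*(s*d₁) with hj₀
  have hj₀1 : (d₁:ℤ) ∣ (j₀ - α₁) := ⟨s*(α₂ - α₁), by linear_combination α₁*hsw⟩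
  have hj₀2 : (d₂:ℤ) ∣ (j₀ - α₂) := ⟨w*(α₁ - α₂), by linear_combination α₂*hsw⟩
  have hmpos : (0:ℤ) < (d₁:ℤ)*(d₂:ℤ) := by positivity
  set jj : ℤ := a + (j₀ - a) % ((d₁:ℤ)*(d₂:ℤ)) with hjj
  have hjj1 : a ≤ jj := le_add_of_nonneg_right (Int.emod_nonneg _ hmpos.ne')
  have hjj2 : jj < a + (d₁:ℤ)*(d₂:ℤ) := by
    have := Int.emod_lt_of_pos (j₀ - a) hmpos; omega
  have hjjd : ((d₁:ℤ)*(d₂:ℤ)) ∣ (jj - j₀) := by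
    have := Int.emod_def (j₀ - a) ((d₁:ℤ)*(d₂:ℤ))
    exact ⟨-((j₀ - a)/((d₁:ℤ)*(d₂:ℤ))), by linarith⟩
  have e1 : (d₁:ℤ) ∣ (jj - α₁) := by
    have he : jj - α₁ = (jj - j₀) + (j₀ - α₁) := by ring
    rw [he]
    exact dvd_add ((dvd_mul_right (d₁:ℤ) (d₂:ℤ)).trans hjjd) hj₀1
  have e2 : (d₂:ℤ) ∣ (jj - α₂) := by
    have he : jj - α₂ = (jj - j₀) + (j₀ - α₂) := by ring
    rw [he]
    exact dvd_add ((dvd_mul_left (d₂:ℤ) (d₁:ℤ)).trans hjjd) hj₀2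
  have hjjmem : jj ∈ b1 ∩ b2 := by
    simp only [hb1, hb2, Finset.mem_inter, Finset.mem_filter, hB, Finset.mem_Ico]
    exact ⟨⟨⟨hjj1, hjj2⟩, e1⟩, ⟨⟨hjj1, hjj2⟩, e2⟩⟩
  have hinter : 1 ≤ (b1 ∩ b2).card := Finset.card_pos.mpr ⟨jj, hjjmem⟩
  have hunion : (b1 ∪ b2).card ≤ d₁ + d₂ - 1 := by
    have := Finset.card_union_add_card_inter b1 b2
    omega
  have hgoodeq : B.filter (fun j => ¬((d₁:ℤ) ∣ (j - α₁)) ∧ ¬((d₂:ℤ) ∣ (j - α₂)))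
      = B \ (b1 ∪ b2) := by
    ext j
    simp only [hb1, hb2, Finset.mem_filter, Finset.mem_sdiff, Finset.mem_union]
    tauto
  have hUB : (b1 ∪ b2).card ≤ d₁ * d₂ := by
    rw [← hcardB]
    exact Finset.card_le_card (Finset.union_subset (Finset.filter_subset _ _) (Finset.filter_subset _ _))
  have idd : (d₁-1)*(d₂-1) + d₁ + d₂ - 1 = d₁*d₂ := by
    obtain ⟨e, rfl⟩ : ∃ e, d₁ = e + 1 := ⟨d₁ - 1, by omega⟩
    obtain ⟨f, rfl⟩ : ∃ f, d₂ = f + 1 := ⟨d₂ - 1, by omega⟩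
    have hm : (e+1)*(f+1) = e*f + e + f + 1 := by ring
    have hm2 : (e+1-1)*(f+1-1) = e*f := by simp
    omega
  rw [hgoodeq, Finset.card_sdiff_of_subset (Finset.union_subset (Finset.filter_subset _ _) (Finset.filter_subset _ _)), hcardB]
  simp only [← hb1, ← hb2]
  omega

private lemma multi_block (d₁ d₂ : ℕ) (h₁ : 0 < d₁) (h₂ : 0 < d₂) (hco : Nat.Coprime d₁ d₂)
    (α₁ α₂ : ℤ) (a : ℤ) (K : ℕ) :
    (d₁ - 1) * (d₂ - 1) * K ≤ ((Finset.Ico a (a + (d₁:ℤ)*(d₂:ℤ)*(K:ℤ))).filter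
      (fun j => ¬((d₁:ℤ) ∣ (j - α₁)) ∧ ¬((d₂:ℤ) ∣ (j - α₂)))).card := by
  classical
  induction K with
  | zero => simp
  | succ K ih =>
    have hsplit : Finset.Ico a (a + (d₁:ℤ)*(d₂:ℤ)*((K:ℤ)+1))
        = Finset.Ico a (a + (d₁:ℤ)*(d₂:ℤ)*(K:ℤ))
          ∪ Finset.Ico (a + (d₁:ℤ)*(d₂:ℤ)*(K:ℤ)) (a + (d₁:ℤ)*(d₂:ℤ)*((K:ℤ)+1)) := by
      rw [Finset.Ico_union_Ico_eq_Ico]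
      · nlinarith [h₁, h₂, (by positivity : (0:ℤ) < (d₁:ℤ)*(d₂:ℤ))]
      · nlinarith [(by positivity : (0:ℤ) < (d₁:ℤ)*(d₂:ℤ))]
    have hblock := block_count d₁ d₂ h₁ h₂ hco α₁ α₂ (a + (d₁:ℤ)*(d₂:ℤ)*(K:ℤ))
    have hdisj : Disjoint (Finset.Ico a (a + (d₁:ℤ)*(d₂:ℤ)*(K:ℤ)))
        (Finset.Ico (a + (d₁:ℤ)*(d₂:ℤ)*(K:ℤ)) (a + (d₁:ℤ)*(d₂:ℤ)*((K:ℤ)+1))) :=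
      Finset.Ico_disjoint_Ico_consecutive _ _ _
    push_cast
    rw [hsplit, Finset.filter_union,
      Finset.card_union_of_disjoint (Finset.disjoint_filter_filter hdisj)]
    have h2' : (d₁-1)*(d₂-1) ≤ ((Finset.Ico (a + (d₁:ℤ)*(d₂:ℤ)*(K:ℤ)) (a + (d₁:ℤ)*(d₂:ℤ)*((K:ℤ)+1))).filter
        (fun j => ¬((d₁:ℤ) ∣ (j - α₁)) ∧ ¬((d₂:ℤ) ∣ (j - α₂)))).card := by
      have : a + (d₁:ℤ)*(d₂:ℤ)*(K:ℤ) + (d₁:ℤ)*(d₂:ℤ) = a + (d₁:ℤ)*(d₂:ℤ)*((K:ℤ)+1) := by ring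
      rw [← this]
      exact hblock
    have := ih
    nlinarith [this, h2']

set_option maxHeartbeats 1000000 in
/-- If `S ⊆ [n]` is free of solutions to `px + qy = rz` and `M` is the largest element
of `S` divisible by `t = gcd(p,q)`, then
`|S| ≤ M - ⌊rM/(r₂(p+q))⌋ - (r₁r₂-r₁-r₂+1)·⌊⌊rM/(r₁(p+q)) - 1/r₂⌋/(r₁r₂)⌋ + ⌈(n-M)(t-1)/t⌉`. -/
theorem stmt9 (p q r n M t r₁ r₂ : ℕ) (hqp : q ≤ p) (hrq : r ≤ q) (hr : 0 < r)
    (hgcd : Nat.gcd (Nat.gcd p q) r = 1) (ht : t = Nat.gcd p q)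
    (hr1 : r₁ = p / t) (hr2 : r₂ = q / t)
    (S : Finset ℕ) (hS : S ⊆ Finset.Icc 1 n)
    (hfree : ∀ x ∈ S, ∀ y ∈ S, ∀ z ∈ S, p * x + q * y ≠ r * z)
    (hM : M ∈ S) (htM : t ∣ M) (hMmax : ∀ x ∈ S, t ∣ x → x ≤ M) :
    (S.card : ℤ) ≤ (M : ℤ) - (r * M / (r₂ * (p + q)) : ℕ) -
        ((r₁ : ℤ) * r₂ - r₁ - r₂ + 1) *
          Int.fdiv ⌊(r * M : ℚ) / (r₁ * (p + q)) - 1 / r₂⌋ (r₁ * r₂) +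
        ⌈(((n : ℚ) - M) * ((t : ℚ) - 1)) / t⌉ := by
  classical
  have hq1 : 0 < q := lt_of_lt_of_le hr hrq
  have hp1 : 0 < p := lt_of_lt_of_le hq1 hqp
  have hgcdpos : 0 < Nat.gcd p q := Nat.gcd_pos_of_pos_left q hp1
  have htpos : 0 < t := by rw [ht]; exact hgcdpos
  have htp : t ∣ p := by rw [ht]; exact Nat.gcd_dvd_left p q
  have htq : t ∣ q := by rw [ht]; exact Nat.gcd_dvd_right p q
  have hpe : p = t * r₁ := by rw [hr1, Nat.mul_div_cancel' htp]
  have hqe : q = t * r₂ := by rw [hr2, Nat.mul_div_cancel' htq]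
  have hr2pos : 0 < r₂ := by
    rcases Nat.eq_zero_or_pos r₂ with h | h
    · rw [h, Nat.mul_zero] at hqe; omega
    · exact h
  have hr1pos : 0 < r₁ := by
    rcases Nat.eq_zero_or_pos r₁ with h | h
    · rw [h, Nat.mul_zero] at hpe; omega
    · exact h
  have h21 : r₂ ≤ r₁ := by rw [hr1, hr2]; exact Nat.div_le_div_right hqp
  have hcop : Nat.Coprime r₁ r₂ := by
    rw [hr1, hr2, ht]; exact Nat.coprime_div_gcd_div_gcd hgcdpos
  obtain ⟨M₀, hMe⟩ := htM
  have hMIcc := hS hM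
  rw [Finset.mem_Icc] at hMIcc
  obtain ⟨hM1, hMn⟩ := hMIcc
  have hM₀pos : 0 < M₀ := by
    rcases Nat.eq_zero_or_pos M₀ with h | h
    · rw [h, Nat.mul_zero] at hMe; omega
    · exact h
  set N : ℕ := r * M₀ with hN
  have hNq : N ≤ r₂ * M := by
    calc N = r * M₀ := rfl
    _ ≤ q * M₀ := Nat.mul_le_mul_right _ hrq
    _ = r₂ * M := by rw [hqe, hMe]; ring
  have hNp : N ≤ r₁ * M := by
    calc N = r * M₀ := rfl
    _ ≤ p * M₀ := Nat.mul_le_mul_right _ (hrq.trans hqp)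
    _ = r₁ * M := by rw [hpe, hMe]; ring
  set A : ℕ := N / (r₂ * (r₁ + r₂)) with hA
  obtain ⟨s, w, hsw⟩ : IsCoprime ((r₁:ℕ):ℤ) ((r₂:ℕ):ℤ) := Nat.isCoprime_iff_coprime.mpr hcop
  have hr2Z : (0:ℤ) < (r₂:ℤ) := by exact_mod_cast hr2pos
  have hr1Z : (0:ℤ) < (r₁:ℤ) := by exact_mod_cast hr1pos
  have h21Z : (r₂:ℤ) ≤ (r₁:ℤ) := by exact_mod_cast h21
  set X : ℤ → ℤ := fun j => (N:ℤ)*s + j*(r₂:ℤ) with hX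
  set Y : ℤ → ℤ := fun j => (N:ℤ)*w - j*(r₁:ℤ) with hY
  have hsol : ∀ j : ℤ, (r₁:ℤ)*X j + (r₂:ℤ)*Y j = (N:ℤ) := by
    intro j; simp only [hX, hY]; linear_combination (N:ℤ)*hsw
  set jlo : ℤ := -(((N:ℤ)*s - 1)/(r₂:ℤ)) with hjlo
  have hxloeq : X jlo = ((N:ℤ)*s - 1) % (r₂:ℤ) + 1 := by
    simp only [hX, hjlo]
    rw [Int.emod_def]; ring
  have hxlo1 : 1 ≤ X jlo := by
    rw [hxloeq]
    have h := Int.emod_nonneg ((N:ℤ)*s - 1) hr2Z.ne'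
    linarith only [h]
  have hxlo2 : X jlo ≤ (r₂:ℤ) := by
    rw [hxloeq]
    have h := Int.emod_lt_of_pos ((N:ℤ)*s - 1) hr2Z
    linarith only [h]
  set F : ℤ := ⌊(N:ℚ)/((r₁:ℚ)*((r₁:ℚ)+(r₂:ℚ))) - 1/(r₂:ℚ)⌋ with hF
  set Cz : ℤ := F / ((r₁:ℤ)*(r₂:ℤ)) with hCz
  set Cn : ℕ := Cz.toNat with hCn
  set a₁ : ℤ := -(w*((N:ℤ)*(s - w))) with ha₁
  set a₂ : ℤ := s*((N:ℤ)*(w - s)) with ha₂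
  clear_value N A X Y jlo F Cz Cn a₁ a₂
  have hdvd1 : ∀ j : ℤ, ((r₁:ℤ) ∣ (X j - (N:ℤ)*w)) ↔ ((r₁:ℤ) ∣ (j - a₁)) := by
    intro j
    have h := dvd_lin_iff (r₁:ℤ) (r₂:ℤ) w ((N:ℤ)*(s-w)) j ⟨-s, by linear_combination hsw⟩
    have e1 : X j - (N:ℤ)*w = (N:ℤ)*(s-w) + j*(r₂:ℤ) := by simp only [hX]; ring
    have e2 : j - a₁ = j + w*((N:ℤ)*(s-w)) := by simp only [ha₁]; ring
    rw [e1, e2]; exact h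
  have hdvd2 : ∀ j : ℤ, ((r₂:ℤ) ∣ (Y j - (N:ℤ)*s)) ↔ ((r₂:ℤ) ∣ (j - a₂)) := by
    intro j
    have h := dvd_lin_iff (r₂:ℤ) (-(r₁:ℤ)) (-s) ((N:ℤ)*(w-s)) j ⟨-w, by linear_combination hsw⟩
    have e1 : Y j - (N:ℤ)*s = (N:ℤ)*(w-s) + j*(-(r₁:ℤ)) := by simp only [hY]; ring
    have e2 : j - a₂ = j + (-s)*((N:ℤ)*(w-s)) := by simp only [ha₂]; ring
    rw [e1, e2]; exact h
  set JA := Finset.Ico jlo (jlo + (A:ℤ)) with hJA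
  set JE := (Finset.Ico (jlo + (A:ℤ)) ((jlo + (A:ℤ)) + (r₁:ℤ)*(r₂:ℤ)*(Cn:ℤ))).filter
      (fun j => ¬((r₁:ℤ) ∣ (j - a₁)) ∧ ¬((r₂:ℤ) ∣ (j - a₂))) with hJE
  set J := JA ∪ JE with hJ
  clear_value JA JE J
  have hAmul : (A:ℤ) * ((r₂:ℤ)*((r₁:ℤ)+(r₂:ℤ))) ≤ (N:ℤ) := by
    have h : A * (r₂ * (r₁ + r₂)) ≤ N := by rw [hA]; exact Nat.div_mul_le_self N (r₂ * (r₁ + r₂))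
    exact_mod_cast h
  have hXjlo : ∀ j : ℤ, X j = X jlo + (j - jlo)*(r₂:ℤ) := by intro j; simp only [hX]; ring
  have hNqZ : (N:ℤ) ≤ (r₂:ℤ)*(M:ℤ) := by exact_mod_cast hNq
  have hNpZ : (N:ℤ) ≤ (r₁:ℤ)*(M:ℤ) := by exact_mod_cast hNp
  -- JA facts
  have hJAf : ∀ j ∈ JA, 1 ≤ X j ∧ X j ≤ Y j ∧ Y j ≤ (M:ℤ) := by
    intro j hj
    rw [hJA, Finset.mem_Ico] at hj
    obtain ⟨hj1, hj2⟩ := hj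
    have hjd : (0:ℤ) ≤ j - jlo := by linarith only [hj1]
    have hx1 : 1 ≤ X j := by
      rw [hXjlo j]
      linarith only [hxlo1, mul_nonneg hjd hr2Z.le]
    have hXub : X j ≤ (A:ℤ)*(r₂:ℤ) := by
      rw [hXjlo j]
      have hle : j - jlo ≤ (A:ℤ) - 1 := by linarith only [hj2]
      linarith only [hxlo2, mul_le_mul_of_nonneg_right hle hr2Z.le]
    have hsum : ((r₁:ℤ)+(r₂:ℤ))*X j ≤ (N:ℤ) := by
      calc ((r₁:ℤ)+(r₂:ℤ))*X j ≤ ((r₁:ℤ)+(r₂:ℤ))*((A:ℤ)*(r₂:ℤ)) :=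
            mul_le_mul_of_nonneg_left hXub (by positivity)
      _ = (A:ℤ) * ((r₂:ℤ)*((r₁:ℤ)+(r₂:ℤ))) := by ring
      _ ≤ (N:ℤ) := hAmul
    have hxy : X j ≤ Y j := by
      have h2 : (r₂:ℤ)*X j ≤ (r₂:ℤ)*Y j := by linarith only [hsum, hsol j]
      exact le_of_mul_le_mul_left h2 hr2Z
    have hyM : Y j ≤ (M:ℤ) := by
      have h0 : (0:ℤ) ≤ (r₁:ℤ)*X j := mul_nonneg hr1Z.le (by linarith only [hx1])
      have h2 : (r₂:ℤ)*Y j ≤ (r₂:ℤ)*(M:ℤ) := by linarith only [hsol j, hNqZ, h0]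
      exact le_of_mul_le_mul_left h2 hr2Z
    exact ⟨hx1, hxy, hyM⟩
  -- JE facts
  have hJEf : ∀ j ∈ JE, 1 ≤ X j ∧ X j ≤ (M:ℤ) ∧ 1 ≤ Y j ∧ Y j ≤ (M:ℤ)
      ∧ ¬((r₁:ℤ) ∣ (j - a₁)) ∧ ¬((r₂:ℤ) ∣ (j - a₂)) := by
    intro j hj
    rw [hJE, Finset.mem_filter, Finset.mem_Ico] at hj
    obtain ⟨⟨hj1, hj2⟩, hd1, hd2⟩ := hj
    have hCnpos : 0 < Cn := by
      rcases Nat.eq_zero_or_pos Cn with h | h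
      · exfalso
        have hz : ((Cn:ℕ):ℤ) = 0 := by rw [h]; norm_num
        rw [hz, mul_zero, add_zero] at hj2
        linarith only [hj1, hj2]
      · exact h
    have hCz0 : 0 ≤ Cz := by
      by_contra hneg
      push_neg at hneg
      have h0 : Cn = 0 := by rw [hCn]; omega
      omega
    have hCzCn : (Cn:ℤ) = Cz := by rw [hCn]; exact Int.toNat_of_nonneg hCz0
    have hfd : (r₁:ℤ)*(r₂:ℤ)*Cz ≤ F := by
      rw [hCz]
      have h1 := Int.emod_nonneg F (by positivity : ((r₁:ℤ)*(r₂:ℤ)) ≠ 0)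
      have h2 := Int.emod_def F ((r₁:ℤ)*(r₂:ℤ))
      linarith only [h1, h2]
    have hFle : (F:ℚ) ≤ (N:ℚ)/((r₁:ℚ)*((r₁:ℚ)+(r₂:ℚ))) - 1/(r₂:ℚ) := by
      rw [hF]; exact Int.floor_le _
    have hr1Q : (0:ℚ) < (r₁:ℚ) := by exact_mod_cast hr1pos
    have hr2Q : (0:ℚ) < (r₂:ℚ) := by exact_mod_cast hr2pos
    have hFq : (F:ℚ)*((r₁:ℚ)*(r₂:ℚ)*((r₁:ℚ)+(r₂:ℚ)))
        ≤ (r₂:ℚ)*(N:ℚ) - (r₁:ℚ)*((r₁:ℚ)+(r₂:ℚ)) := by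
      have hpos : (0:ℚ) < (r₁:ℚ)*(r₂:ℚ)*((r₁:ℚ)+(r₂:ℚ)) := by positivity
      calc (F:ℚ)*((r₁:ℚ)*(r₂:ℚ)*((r₁:ℚ)+(r₂:ℚ)))
          ≤ ((N:ℚ)/((r₁:ℚ)*((r₁:ℚ)+(r₂:ℚ))) - 1/(r₂:ℚ))*((r₁:ℚ)*(r₂:ℚ)*((r₁:ℚ)+(r₂:ℚ))) :=
            mul_le_mul_of_nonneg_right hFle hpos.le
        _ = (r₂:ℚ)*(N:ℚ) - (r₁:ℚ)*((r₁:ℚ)+(r₂:ℚ)) := by field_simp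
    have hFZ : F*((r₁:ℤ)*(r₂:ℤ)*((r₁:ℤ)+(r₂:ℤ))) ≤ (r₂:ℤ)*(N:ℤ) - (r₁:ℤ)*((r₁:ℤ)+(r₂:ℤ)) := by
      exact_mod_cast hFq
    have hmulA := mul_le_mul_of_nonneg_left hAmul hr1Z.le
    have hsq : (0:ℤ) ≤ ((r₁:ℤ) - (r₂:ℤ))*((r₁:ℤ)+(r₂:ℤ)) :=
      mul_nonneg (by linarith only [h21Z]) (by positivity)
    have hkey2 : ((r₁:ℤ)+(r₂:ℤ))*((r₁:ℤ)*(r₂:ℤ)*((A:ℤ)+F)) ≤ ((r₁:ℤ)+(r₂:ℤ))*((N:ℤ)-(r₂:ℤ)) := by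
      linarith only [hmulA, hFZ, hsq]
    have key : (r₁:ℤ)*(r₂:ℤ)*((A:ℤ)+F) ≤ (N:ℤ)-(r₂:ℤ) :=
      le_of_mul_le_mul_left hkey2 (by positivity)
    have hjd : (0:ℤ) ≤ j - jlo := by linarith only [hj1, Int.natCast_nonneg A]
    have hx1 : 1 ≤ X j := by
      rw [hXjlo j]
      linarith only [hxlo1, mul_nonneg hjd hr2Z.le]
    have hXub : X j ≤ ((A:ℤ) + (r₁:ℤ)*(r₂:ℤ)*(Cn:ℤ))*(r₂:ℤ) := by
      rw [hXjlo j]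
      have hle : j - jlo ≤ (A:ℤ) + (r₁:ℤ)*(r₂:ℤ)*(Cn:ℤ) - 1 := by linarith only [hj2]
      linarith only [hxlo2, mul_le_mul_of_nonneg_right hle hr2Z.le]
    have hr1X : (r₁:ℤ)*X j ≤ (N:ℤ) - (r₂:ℤ) := by
      calc (r₁:ℤ)*X j ≤ (r₁:ℤ)*(((A:ℤ) + (r₁:ℤ)*(r₂:ℤ)*(Cn:ℤ))*(r₂:ℤ)) :=
            mul_le_mul_of_nonneg_left hXub hr1Z.le
      _ = (r₁:ℤ)*(r₂:ℤ)*((A:ℤ) + (r₁:ℤ)*(r₂:ℤ)*(Cn:ℤ)) := by ring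
      _ ≤ (r₁:ℤ)*(r₂:ℤ)*((A:ℤ) + F) := by
            have hc : (r₁:ℤ)*(r₂:ℤ)*(Cn:ℤ) ≤ F := by rw [hCzCn]; exact hfd
            have h' := mul_le_mul_of_nonneg_left hc (by positivity : (0:ℤ) ≤ (r₁:ℤ)*(r₂:ℤ))
            linarith only [h']
      _ ≤ (N:ℤ)-(r₂:ℤ) := key
    have hy1 : 1 ≤ Y j := by
      have h2 : (r₂:ℤ)*1 ≤ (r₂:ℤ)*Y j := by linarith only [hsol j, hr1X]
      exact le_of_mul_le_mul_left h2 hr2Z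
    have hyM : Y j ≤ (M:ℤ) := by
      have h0 : (0:ℤ) ≤ (r₁:ℤ)*X j := mul_nonneg hr1Z.le (by linarith only [hx1])
      have h2 : (r₂:ℤ)*Y j ≤ (r₂:ℤ)*(M:ℤ) := by linarith only [hsol j, hNqZ, h0]
      exact le_of_mul_le_mul_left h2 hr2Z
    have hxM : X j ≤ (M:ℤ) := by
      have h0 : (r₂:ℤ) ≤ (r₂:ℤ)*Y j := by
        have := mul_le_mul_of_nonneg_left hy1 hr2Z.le
        linarith only [this]
      have h2 : (r₁:ℤ)*X j ≤ (r₁:ℤ)*(M:ℤ) := by linarith only [hsol j, hNpZ, h0, hr1X, hr2Z]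
      exact le_of_mul_le_mul_left h2 hr1Z
    exact ⟨hx1, hxM, hy1, hyM, hd1, hd2⟩
  have hmemIcc : ∀ j ∈ J, 1 ≤ X j ∧ X j ≤ (M:ℤ) ∧ 1 ≤ Y j ∧ Y j ≤ (M:ℤ) := by
    intro j hj
    rw [hJ, Finset.mem_union] at hj
    rcases hj with hj | hj
    · obtain ⟨h1, h2, h3⟩ := hJAf j hj
      exact ⟨h1, le_trans h2 h3, le_trans h1 h2, h3⟩
    · obtain ⟨h1, h2, h3, h4, _, _⟩ := hJEf j hj
      exact ⟨h1, h2, h3, h4⟩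
  have hsolsN : ∀ j : ℤ, 1 ≤ X j → 1 ≤ Y j →
      p * (X j).toNat + q * (Y j).toNat = r * M := by
    intro j hx hy
    have h := hsol j
    have hXt : ((X j).toNat : ℤ) = X j := Int.toNat_of_nonneg (by linarith only [hx])
    have hYt : ((Y j).toNat : ℤ) = Y j := Int.toNat_of_nonneg (by linarith only [hy])
    have hZ : (p:ℤ) * (X j) + (q:ℤ) * (Y j) = (r:ℤ)*(M:ℤ) := by
      have hpZ : (p:ℤ) = (t:ℤ)*(r₁:ℤ) := by exact_mod_cast hpe
      have hqZ : (q:ℤ) = (t:ℤ)*(r₂:ℤ) := by exact_mod_cast hqe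
      have hMZ : (M:ℤ) = (t:ℤ)*(M₀:ℤ) := by exact_mod_cast hMe
      have hNZ : (N:ℤ) = (r:ℤ)*(M₀:ℤ) := by exact_mod_cast hN
      linear_combination (t:ℤ)*h + (X j)*hpZ + (Y j)*hqZ - (r:ℤ)*hMZ + (t:ℤ)*hNZ
    have hcast : ((p * (X j).toNat + q * (Y j).toNat : ℕ) : ℤ) = ((r * M : ℕ) : ℤ) := by
      push_cast
      rw [hXt, hYt]
      exact hZ
    exact_mod_cast hcast
  set g : ℤ → ℕ := fun j => if (X j).toNat ∈ S then (Y j).toNat else (X j).toNat with hg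
  clear_value g
  have hgT : ∀ j ∈ J, g j ∈ Finset.Icc 1 M \ S := by
    intro j hj
    obtain ⟨h1, h2, h3, h4⟩ := hmemIcc j hj
    by_cases hc : (X j).toNat ∈ S
    · rw [hg]
      simp only [if_pos hc, Finset.mem_sdiff, Finset.mem_Icc]
      refine ⟨⟨by omega, by omega⟩, ?_⟩
      intro hYS
      exact hfree _ hc _ hYS _ hM (hsolsN j h1 h3)
    · rw [hg]
      simp only [if_neg hc, Finset.mem_sdiff, Finset.mem_Icc]
      exact ⟨⟨by omega, by omega⟩, hc⟩
  have hclaim : ∀ j ∈ J, ∀ j' ∈ J, X j = Y j' → j = j' := by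
    intro j hj j' hj' he
    have hYdvd : ∀ i : ℤ, (r₁:ℤ) ∣ (Y i - (N:ℤ)*w) := fun i => ⟨-i, by simp only [hY]; ring⟩
    have hXdvd : ∀ i : ℤ, (r₂:ℤ) ∣ (X i - (N:ℤ)*s) := fun i => ⟨i, by simp only [hX]; ring⟩
    rw [hJ, Finset.mem_union] at hj hj'
    rcases hj with hj | hj
    · rcases hj' with hj' | hj'
      · obtain ⟨hx1, hxy, hyM⟩ := hJAf j hj
        obtain ⟨hx1', hxy', hyM'⟩ := hJAf j' hj'
        by_contra hne
        rcases lt_or_gt_of_ne hne with hlt | hgt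
        · have hXX : X j' - X j = (j' - j)*(r₂:ℤ) := by simp only [hX]; ring
          have hd : (1:ℤ) ≤ j' - j := by linarith only [hlt]
          have hmul := mul_le_mul_of_nonneg_right hd hr2Z.le
          linarith only [hXX, hxy', he, hmul, hr2Z]
        · have hYY : Y j' - Y j = (j - j')*(r₁:ℤ) := by simp only [hY]; ring
          have hd : (1:ℤ) ≤ j - j' := by linarith only [hgt]
          have hmul := mul_le_mul_of_nonneg_right hd hr1Z.le
          linarith only [hYY, hxy, he, hmul, hr1Z]
      · obtain ⟨_, _, _, _, _, hd2⟩ := hJEf j' hj'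
        have hh : (r₂:ℤ) ∣ (Y j' - (N:ℤ)*s) := he ▸ hXdvd j
        exact absurd ((hdvd2 j').mp hh) hd2
    · obtain ⟨_, _, _, _, hd1, _⟩ := hJEf j hj
      have hh : (r₁:ℤ) ∣ (X j - (N:ℤ)*w) := by rw [he]; exact hYdvd j'
      exact absurd ((hdvd1 j).mp hh) hd1
  have hginj : Set.InjOn g ↑J := by
    intro j hj j' hj' he
    simp only [Finset.mem_coe] at hj hj'
    obtain ⟨h1, h2, h3, h4⟩ := hmemIcc j hj
    obtain ⟨h1', h2', h3', h4'⟩ := hmemIcc j' hj'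
    have hXinj : X j = X j' → j = j' := by
      intro hxx
      have hz : (j - j')*(r₂:ℤ) = 0 := by
        have hd : X j - X j' = (j - j')*(r₂:ℤ) := by simp only [hX]; ring
        linarith only [hd, hxx]
      rcases mul_eq_zero.mp hz with h | h
      · linarith only [h]
      · exact absurd h hr2Z.ne'
    have hYinj : Y j = Y j' → j = j' := by
      intro hyy
      have hz : (j' - j)*(r₁:ℤ) = 0 := by
        have hd : Y j - Y j' = (j' - j)*(r₁:ℤ) := by simp only [hY]; ring
        linarith only [hd, hyy]
      rcases mul_eq_zero.mp hz with h | h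
      · linarith only [h]
      · exact absurd h hr1Z.ne'
    rw [hg] at he
    simp only at he
    by_cases c1 : (X j).toNat ∈ S <;> by_cases c2 : (X j').toNat ∈ S
    · rw [if_pos c1, if_pos c2] at he
      apply hYinj; omega
    · rw [if_pos c1, if_neg c2] at he
      exact (hclaim j' (by exact hj') j (by exact hj) (by omega)).symm
    · rw [if_neg c1, if_pos c2] at he
      exact hclaim j (by exact hj) j' (by exact hj') (by omega)
    · rw [if_neg c1, if_neg c2] at he
      apply hXinj; omega
  have hJsub : J.card ≤ (Finset.Icc 1 M \ S).card := Finset.card_le_card_of_injOn g hgT hginj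
  have hJAcard : JA.card = A := by
    rw [hJA, Int.card_Ico]
    simp
  have hdisj : Disjoint JA JE := by
    rw [Finset.disjoint_left]
    intro x hx hx'
    rw [hJA, Finset.mem_Ico] at hx
    rw [hJE] at hx'
    have hx'' := Finset.mem_of_mem_filter x hx'
    rw [Finset.mem_Ico] at hx''
    have := hx.2
    have := hx''.1
    omega
  have hJcard : J.card = A + JE.card := by
    rw [hJ, Finset.card_union_of_disjoint hdisj, hJAcard]
  have hJEge : (r₁ - 1)*(r₂ - 1)*Cn ≤ JE.card := by
    have h := multi_block r₁ r₂ hr1pos hr2pos hcop a₁ a₂ (jlo + (A:ℤ)) Cn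
    rw [hJE]
    exact h
  set Slow := S.filter (fun x => x ≤ M) with hSlow
  set Shigh := S.filter (fun x => ¬ x ≤ M) with hShigh
  clear_value Slow Shigh
  have hsplitS : Slow.card + Shigh.card = S.card := by
    rw [hSlow, hShigh]
    exact Finset.card_filter_add_card_filter_not _
  have hSlowsub : Slow ⊆ Finset.Icc 1 M := by
    intro x hx
    rw [hSlow, Finset.mem_filter] at hx
    have h := hS hx.1
    rw [Finset.mem_Icc] at h ⊢
    omega
  have hIcc : (Finset.Icc 1 M).card = M := by rw [Nat.card_Icc]; omega
  have hlowM : Slow.card + J.card ≤ M := by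
    have h1 : (Finset.Icc 1 M \ S).card ≤ (Finset.Icc 1 M \ Slow).card := by
      apply Finset.card_le_card
      apply Finset.sdiff_subset_sdiff (Finset.Subset.refl _)
      rw [hSlow]
      exact Finset.filter_subset _ _
    have h2 : (Finset.Icc 1 M \ Slow).card = (Finset.Icc 1 M).card - Slow.card :=
      Finset.card_sdiff_of_subset hSlowsub
    have h3 : Slow.card ≤ (Finset.Icc 1 M).card := Finset.card_le_card hSlowsub
    omega
  obtain ⟨kd, hkd⟩ : ∃ kd, (n - M)/t = kd := ⟨_, rfl⟩
  have hhigh : Shigh.card + kd ≤ n - M := by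
    set U := (Finset.Ioc M n).filter (fun x => ¬ t ∣ x) with hU
    have hsubU : Shigh ⊆ U := by
      intro x hx
      rw [hShigh, Finset.mem_filter] at hx
      obtain ⟨hxS, hxM⟩ := hx
      have hxn := hS hxS
      rw [Finset.mem_Icc] at hxn
      rw [hU, Finset.mem_filter, Finset.mem_Ioc]
      exact ⟨⟨by omega, hxn.2⟩, fun hdvd => hxM (hMmax x hxS hdvd)⟩
    have hUc := Finset.card_filter_add_card_filter_not
      (s := Finset.Ioc M n) (fun x => t ∣ x)
    rw [Nat.card_Ioc] at hUc
    have hdvdcard : ((Finset.Ioc M n).filter (fun x => t ∣ x)).card = kd := by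
      have h0n := Nat.Ioc_filter_dvd_card_eq_div n t
      have h0M := Nat.Ioc_filter_dvd_card_eq_div M t
      have hsplit2 : Finset.Ioc 0 n = Finset.Ioc 0 M ∪ Finset.Ioc M n :=
        (Finset.Ioc_union_Ioc_eq_Ioc (by omega) (by omega)).symm
      have hdisj2 : Disjoint (Finset.Ioc 0 M) (Finset.Ioc M n) := by
        rw [Finset.disjoint_left]
        intro x hx hx'
        rw [Finset.mem_Ioc] at hx hx'
        omega
      have hcards : (Finset.filter (fun x => t ∣ x) (Finset.Ioc 0 n)).card
          = (Finset.filter (fun x => t ∣ x) (Finset.Ioc 0 M)).card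
            + (Finset.filter (fun x => t ∣ x) (Finset.Ioc M n)).card := by
        rw [hsplit2, Finset.filter_union,
          Finset.card_union_of_disjoint (Finset.disjoint_filter_filter hdisj2)]
      have hMt : M/t = M₀ := by rw [hMe]; exact Nat.mul_div_cancel_left _ htpos
      have hnt : n/t = M₀ + kd := by
        have hne : n = t*M₀ + (n - M) := by omega
        rw [hne, Nat.mul_add_div htpos, hkd]
      have hstep : M₀ + (Finset.filter (fun x => t ∣ x) (Finset.Ioc M n)).card
          = M₀ + kd := by
        calc M₀ + (Finset.filter (fun x => t ∣ x) (Finset.Ioc M n)).card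
            = (Finset.filter (fun x => t ∣ x) (Finset.Ioc 0 M)).card
              + (Finset.filter (fun x => t ∣ x) (Finset.Ioc M n)).card := by rw [h0M, hMt]
        _ = (Finset.filter (fun x => t ∣ x) (Finset.Ioc 0 n)).card := hcards.symm
        _ = n/t := h0n
        _ = M₀ + kd := hnt
      omega
    have hle := Finset.card_le_card hsubU
    rw [hU] at hle
    omega
  have hfinalnat : S.card + A + JE.card + kd ≤ M + (n - M) := by omega
  -- relate to statement's terms
  have hAstmt : r * M / (r₂ * (p + q)) = A := by
    rw [hA, hN]
    have h1 : r * M = t * (r * M₀) := by rw [hMe]; ring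
    have h2 : r₂ * (p + q) = t * (r₂ * (r₁ + r₂)) := by rw [hpe, hqe]; ring
    rw [h1, h2, Nat.mul_div_mul_left _ _ htpos]
  have hFstmt : ⌊(r * M : ℚ) / (r₁ * (p + q)) - 1 / r₂⌋ = F := by
    rw [hF]
    congr 1
    have e1 : ((r:ℚ) * (M:ℚ)) = (t:ℚ)*(N:ℚ) := by
      rw [hN]; push_cast [hMe]; ring
    have e2 : ((r₁:ℚ) * ((p:ℚ) + (q:ℚ))) = (t:ℚ)*((r₁:ℚ)*((r₁:ℚ)+(r₂:ℚ))) := by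
      push_cast [hpe, hqe]; ring
    have ht0 : ((t:ℚ)) ≠ 0 := by
      have h : (0:ℚ) < (t:ℚ) := by exact_mod_cast htpos
      exact h.ne'
    rw [show ((r:ℚ) * ↑M / (↑r₁ * (↑p + ↑q)) : ℚ)
        = (t:ℚ)*(N:ℚ) / ((t:ℚ)*((r₁:ℚ)*((r₁:ℚ)+(r₂:ℚ)))) from by rw [e1, e2],
      mul_div_mul_left _ _ ht0]
  have hfdiv : Int.fdiv ⌊(r * M : ℚ) / (r₁ * (p + q)) - 1 / r₂⌋ ((r₁:ℤ) * (r₂:ℤ)) = Cz := by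
    rw [hFstmt, hCz, Int.fdiv_eq_ediv_of_nonneg _ (by positivity)]
  have hceil : ⌈(((n : ℚ) - M) * ((t : ℚ) - 1)) / t⌉ = ((n - M : ℕ) : ℤ) - (kd : ℤ) := by
    have hkc : ((n:ℚ) - (M:ℚ)) = ((n - M : ℕ) : ℚ) := by
      rw [Nat.cast_sub hMn]
    rw [hkc]
    have ht0 : (0:ℚ) < (t:ℚ) := by exact_mod_cast htpos
    rw [Int.ceil_eq_iff]
    have hdm := Nat.div_add_mod (n - M) t
    have hml := Nat.mod_lt (n - M) htpos
    rw [hkd] at hdm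
    have hdm' : (t:ℚ) * (kd:ℚ) + (((n-M) % t : ℕ):ℚ) = ((n - M:ℕ):ℚ) := by exact_mod_cast hdm
    have hml' : (((n-M) % t : ℕ):ℚ) < (t:ℚ) := by exact_mod_cast hml
    have hm0 : (0:ℚ) ≤ (((n-M) % t : ℕ):ℚ) := by positivity
    constructor
    · rw [lt_div_iff₀ ht0]
      push_cast
      nlinarith [hdm', hml', ht0]
    · rw [div_le_iff₀ ht0]
      push_cast
      nlinarith [hdm', hm0, ht0]
  -- final assembly in ℤ
  rw [hAstmt, hfdiv, hceil]
  have hBC : ((r₁:ℤ)*(r₂:ℤ) - (r₁:ℤ) - (r₂:ℤ) + 1)*Cz ≤ (((r₁ - 1)*(r₂ - 1)*Cn : ℕ) : ℤ) := by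
    have hBeq : ((r₁:ℤ)*(r₂:ℤ) - (r₁:ℤ) - (r₂:ℤ) + 1) = (((r₁-1)*(r₂-1) : ℕ) : ℤ) := by
      push_cast [Nat.cast_sub hr1pos, Nat.cast_sub hr2pos]
      ring
    rw [hBeq]
    have hCle : Cz ≤ (Cn:ℤ) := by rw [hCn]; exact Int.self_le_toNat Cz
    have hBnn : (0:ℤ) ≤ (((r₁-1)*(r₂-1) : ℕ) : ℤ) := by positivity
    calc (((r₁-1)*(r₂-1) : ℕ) : ℤ) * Cz ≤ (((r₁-1)*(r₂-1) : ℕ) : ℤ) * (Cn:ℤ) :=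
          mul_le_mul_of_nonneg_left hCle hBnn
    _ = (((r₁ - 1)*(r₂ - 1)*Cn : ℕ) : ℤ) := by push_cast; ring
  have hfinZ : (S.card:ℤ) + (A:ℤ) + (JE.card:ℤ) + (kd:ℤ) ≤ (M:ℤ) + ((n - M : ℕ):ℤ) := by
    exact_mod_cast hfinalnat
  have hJEgeZ : (((r₁ - 1)*(r₂ - 1)*Cn : ℕ) : ℤ) ≤ (JE.card:ℤ) := by exact_mod_cast hJEge
  linarith only [hfinZ, hJEgeZ, hBC]
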